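/- For any commutative Noetherian ring R, Γ_E(R) is not a cycle graph; in particular, Γ_E(R) contains no induced path of length five whose endpoints have degree 2. Concretely: if [x]—[y]—[z]—[w]—[v] is a path of distinct vertices in Γ_E(R), then yw is a nonzero zero divisor whose class is adjacent to [x], [z], and [v], which is impossible in a cycle graph. -/

import Mathlib

open scoped Classical

noncomputable section

/-- The annihilator ideal of an element `x` of a commutative ring `R`. -/
def ann (R : Type*) [CommRing R] (x : R) : Ideal R := Ideal.torsionOf R R x

/-- The type of nonzero zero divisors of `R`. -/
def ZD (R : Type*) [CommRing R] : Type _ :=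
  {x : R // x ≠ 0 ∧ ∃ y : R, y ≠ 0 ∧ x * y = 0}

/-- Two zero divisors are equivalent iff they have the same annihilator. -/
instance annSetoid (R : Type*) [CommRing R] : Setoid (ZD R) :=
  ⟨fun a b => ann R a.1 = ann R b.1,
   fun _ => rfl, Eq.symm, Eq.trans⟩

/-- The vertex set of `Γ_E(R)`: equivalence classes of nonzero zero divisors. -/
def GammaEV (R : Type*) [CommRing R] : Type _ := Quotient (annSetoid R)

/-- The class of a nonzero zero divisor. -/
def cls (R : Type*) [CommRing R] (a : ZD R) : GammaEV R :=
  Quotient.mk (annSetoid R) a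

/-- The graph `Γ_E(R)` of equivalence classes of zero divisors. -/
def gammaE (R : Type*) [CommRing R] : SimpleGraph (GammaEV R) where
  Adj u v := u ≠ v ∧ ∃ a b : ZD R, cls R a = u ∧ cls R b = v ∧ a.1 * b.1 = 0
  symm := by
    constructor
    rintro u v ⟨huv, a, b, ha, hb, hab⟩
    exact ⟨huv.symm, b, a, hb, ha, by rwa [mul_comm] at hab⟩
  loopless := by constructor; rintro u ⟨h, -⟩; exact h rfl

/-- `I` is a maximal element of the family `F = {ann x : 0 ≠ x ∈ R}`. -/
def MaxAnn (R : Type*) [CommRing R] (I : Ideal R) : Prop :=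
  (∃ x : R, x ≠ 0 ∧ I = ann R x) ∧
    ∀ y : R, y ≠ 0 → I ≤ ann R y → I = ann R y

section helpers
variable {R : Type*} [CommRing R]

lemma mem_ann_iff {x r : R} : r ∈ ann R x ↔ r * x = 0 := by
  simp [ann, Ideal.mem_torsionOf_iff, smul_eq_mul]

lemma cls_eq_iff {a b : ZD R} : cls R a = cls R b ↔ ann R a.1 = ann R b.1 :=
  ⟨fun h => Quotient.exact h, fun h => Quotient.sound h⟩

lemma adj_mul {a b : ZD R} (h : (gammaE R).Adj (cls R a) (cls R b)) :
    a.1 * b.1 = 0 := by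
  obtain ⟨hne, a', b', ha, hb, hab⟩ := h
  have h1 : ann R a'.1 = ann R a.1 := cls_eq_iff.mp ha
  have h2 : ann R b'.1 = ann R b.1 := cls_eq_iff.mp hb
  have hb' : b'.1 ∈ ann R a'.1 := mem_ann_iff.mpr (by linear_combination hab)
  rw [h1] at hb'
  have h3 : b'.1 * a.1 = 0 := mem_ann_iff.mp hb'
  have ha' : a.1 ∈ ann R b'.1 := mem_ann_iff.mpr (by linear_combination h3)
  rw [h2] at ha'
  exact mem_ann_iff.mp ha'

lemma adj_or_eq {a b : ZD R} (h : a.1 * b.1 = 0) :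
    cls R a = cls R b ∨ (gammaE R).Adj (cls R a) (cls R b) := by
  by_cases hc : cls R a = cls R b
  · exact Or.inl hc
  · exact Or.inr ⟨hc, a, b, rfl, rfl, h⟩

lemma cls_out (u : GammaEV R) : cls R (Quotient.out u) = u := Quotient.out_eq u

/-- K3 containment lemma -/
lemma tri (a b c : ZD R) (hab : a.1 * b.1 = 0) (hac : a.1 * c.1 = 0)
    (hbc : b.1 * c.1 = 0)
    (huniv : ∀ x : ZD R,
      ann R x.1 = ann R a.1 ∨ ann R x.1 = ann R b.1 ∨ ann R x.1 = ann R c.1) :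
    ann R a.1 ≤ ann R b.1 ∨ ann R a.1 ≤ ann R c.1 := by
  rw [← Ideal.subset_union]
  intro x hx
  have hxa : x * a.1 = 0 := mem_ann_iff.mp (SetLike.mem_coe.mp hx)
  by_cases hx0 : x = 0
  · exact Set.mem_union_left _ (by simp [hx0])
  · have xZ : ZD R := ⟨x, hx0, a.1, a.2.1, hxa⟩
    rcases huniv ⟨x, hx0, a.1, a.2.1, hxa⟩ with h | h | h
    · -- ann x = ann a; b ∈ ann a = ann x ⇒ x*b = 0
      have hb : b.1 ∈ ann R a.1 := mem_ann_iff.mpr (by linear_combination hab)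
      rw [← h] at hb
      have : x * b.1 = 0 := by linear_combination mem_ann_iff.mp hb
      exact Set.mem_union_left _ (SetLike.mem_coe.mpr (mem_ann_iff.mpr this))
    · -- ann x = ann b; c ∈ ann b = ann x
      have hc : c.1 ∈ ann R b.1 := mem_ann_iff.mpr (by linear_combination hbc)
      rw [← h] at hc
      have : x * c.1 = 0 := by linear_combination mem_ann_iff.mp hc
      exact Set.mem_union_right _ (SetLike.mem_coe.mpr (mem_ann_iff.mpr this))
    · -- ann x = ann c; b ∈ ann c = ann x
      have hb : b.1 ∈ ann R c.1 := mem_ann_iff.mpr (by linear_combination hbc)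
      rw [← h] at hb
      have : x * b.1 = 0 := by linear_combination mem_ann_iff.mp hb
      exact Set.mem_union_left _ (SetLike.mem_coe.mpr (mem_ann_iff.mpr this))

/-- C4 containment lemma: cycle m-u-b-v, m not adjacent to b. -/
lemma quad (m u b v : ZD R) (hmu : m.1 * u.1 = 0) (hub : u.1 * b.1 = 0)
    (hbv : b.1 * v.1 = 0) (hvm : v.1 * m.1 = 0) (hmb : m.1 * b.1 ≠ 0)
    (huniv : ∀ x : ZD R,
      ann R x.1 = ann R m.1 ∨ ann R x.1 = ann R u.1 ∨
      ann R x.1 = ann R b.1 ∨ ann R x.1 = ann R v.1) :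
    ann R m.1 ≤ ann R u.1 ⊓ ann R v.1 ∨ ann R m.1 ≤ ann R b.1 := by
  rw [← Ideal.subset_union]
  intro x hx
  have hxm : x * m.1 = 0 := mem_ann_iff.mp (SetLike.mem_coe.mp hx)
  by_cases hx0 : x = 0
  · exact Set.mem_union_left _ (by simp [hx0])
  · rcases huniv ⟨x, hx0, m.1, m.2.1, hxm⟩ with h | h | h | h
    · -- ann x = ann m : u, v ∈ ann m ⇒ x ∈ ann u ⊓ ann v
      have hu : u.1 ∈ ann R m.1 := mem_ann_iff.mpr (by linear_combination hmu)
      have hv : v.1 ∈ ann R m.1 := mem_ann_iff.mpr (by linear_combination hvm)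
      rw [← h] at hu hv
      refine Set.mem_union_left _ (SetLike.mem_coe.mpr (Submodule.mem_inf.mpr ⟨?_, ?_⟩))
      · exact mem_ann_iff.mpr (by linear_combination mem_ann_iff.mp hu)
      · exact mem_ann_iff.mpr (by linear_combination mem_ann_iff.mp hv)
    · -- ann x = ann u : b ∈ ann u ⇒ x ∈ ann b
      have hb : b.1 ∈ ann R u.1 := mem_ann_iff.mpr (by linear_combination hub)
      rw [← h] at hb
      exact Set.mem_union_right _ (SetLike.mem_coe.mpr (mem_ann_iff.mpr
        (by linear_combination mem_ann_iff.mp hb)))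
    · -- ann x = ann b : m ∈ ann x = ann b ⇒ m*b = 0, contradiction
      exfalso
      have hm : m.1 ∈ ann R x := mem_ann_iff.mpr (by linear_combination hxm)
      rw [h] at hm
      exact hmb (by linear_combination mem_ann_iff.mp hm)
    · -- ann x = ann v : b ∈ ann v ⇒ x ∈ ann b
      have hb : b.1 ∈ ann R v.1 := mem_ann_iff.mpr (by linear_combination hbv)
      rw [← h] at hb
      exact Set.mem_union_right _ (SetLike.mem_coe.mpr (mem_ann_iff.mpr
        (by linear_combination mem_ann_iff.mp hb)))

end helpers

section CycLemmas
open SimpleGraph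

lemma cyc_adj_iff {m : ℕ} {u v : Fin (m+2)} :
    (cycleGraph (m+2)).Adj u v ↔ u = v + 1 ∨ v = u + 1 := by
  rw [cycleGraph_adj]
  constructor
  · rintro (h | h)
    · left; rw [← h]; abel
    · right; rw [← h]; abel
  · rintro (h | h)
    · left; rw [h]; abel
    · right; rw [h]; abel

lemma mk_add_one {m i : ℕ} (hi : i < m + 2) (hi1 : i + 1 < m + 2) :
    (⟨i, hi⟩ : Fin (m+2)) + 1 = ⟨i + 1, hi1⟩ := by
  apply Fin.ext
  simp [Fin.add_def, Nat.mod_eq_of_lt hi1]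

lemma cyc_adj_succ {n i : ℕ} (hn : 2 ≤ n) (hi : i < n) (hi1 : i + 1 < n) :
    (cycleGraph n).Adj ⟨i, hi⟩ ⟨i + 1, hi1⟩ := by
  obtain ⟨m, rfl⟩ : ∃ m, n = m + 2 := ⟨n - 2, by omega⟩
  rw [cyc_adj_iff]
  right
  exact (mk_add_one hi hi1).symm

lemma cyc_not_adj_13 {n : ℕ} (hn : 5 ≤ n) :
    ¬ (cycleGraph n).Adj ⟨1, by omega⟩ ⟨3, by omega⟩ := by
  obtain ⟨m, rfl⟩ : ∃ m, n = m + 2 := ⟨n - 2, by omega⟩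
  rw [cyc_adj_iff]
  rintro (h | h)
  · rw [mk_add_one (by omega) (by omega)] at h
    have := congrArg Fin.val h
    simp at this
  · rw [mk_add_one (by omega) (by omega)] at h
    have := congrArg Fin.val h
    simp at this

lemma cyc_decode {n i : ℕ} (hn : 2 ≤ n) (hi : i < n) {j : Fin n}
    (h : j = ⟨i, hi⟩ ∨ (cycleGraph n).Adj j ⟨i, hi⟩) :
    j.val = i ∨ j.val = i + 1 ∨ j.val + 1 = i ∨ (i = 0 ∧ j.val = n - 1) ∨
      (j.val = 0 ∧ i + 1 = n) := by
  obtain ⟨m, rfl⟩ : ∃ m, n = m + 2 := ⟨n - 2, by omega⟩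
  rcases h with h | h
  · left; rw [h]
  · rw [cyc_adj_iff] at h
    rcases h with h | h
    · have hj : j.val = (i + 1) % (m+2) := by rw [h]; simp [Fin.add_def]
      rcases Nat.lt_or_ge (i+1) (m+2) with h1 | h1
      · right; left; rw [hj, Nat.mod_eq_of_lt h1]
      · have h2 : i + 1 = m + 2 := by omega
        right; right; right; right
        exact ⟨by rw [hj, h2]; simp, by omega⟩
    · have hv : i = (j.val + 1) % (m+2) := by
        have := congrArg Fin.val h
        simpa [Fin.add_def] using this
      rcases Nat.lt_or_ge (j.val+1) (m+2) with h1 | h1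
      · right; right; left
        exact ((hv.trans (Nat.mod_eq_of_lt h1))).symm
      · have h2 : j.val + 1 = m + 2 := by have := j.isLt; omega
        right; right; right; left
        exact ⟨by rw [hv, h2]; simp, by omega⟩
end CycLemmas

set_option maxHeartbeats 2000000 in
open SimpleGraph in
theorem stmt6 (R : Type*) [CommRing R] [IsNoetherianRing R] :
    (¬ ∃ (n : ℕ) (_ : 3 ≤ n) (e : GammaEV R ≃ Fin n),
        ∀ u v : GammaEV R,
          (gammaE R).Adj u v ↔ (SimpleGraph.cycleGraph n).Adj (e u) (e v)) ∧
      ∀ x y z w v : ZD R,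
        (gammaE R).Adj (cls R x) (cls R y) → (gammaE R).Adj (cls R y) (cls R z) →
        (gammaE R).Adj (cls R z) (cls R w) → (gammaE R).Adj (cls R w) (cls R v) →
        ¬ (gammaE R).Adj (cls R y) (cls R w) → cls R y ≠ cls R w →
        y.1 * w.1 ≠ 0 ∧ (y.1 * w.1) * x.1 = 0 ∧ (y.1 * w.1) * z.1 = 0 ∧
          (y.1 * w.1) * v.1 = 0 := by
  constructor
  · rintro ⟨n, hn3, e, he⟩
    obtain ⟨A, hclsA⟩ : ∃ A : Fin n → ZD R, ∀ i, cls R (A i) = e.symm i :=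
      ⟨fun i => (e.symm i).out, fun i => cls_out _⟩
    have hAdjIff : ∀ i j : Fin n,
        (gammaE R).Adj (cls R (A i)) (cls R (A j)) ↔ (cycleGraph n).Adj i j := by
      intro i j
      rw [hclsA i, hclsA j, he, e.apply_symm_apply, e.apply_symm_apply]
    have hannNe : ∀ i j : Fin n, i ≠ j → ann R (A i).1 ≠ ann R (A j).1 := by
      intro i j hij h
      exact hij (e.symm.injective (by rw [← hclsA i, ← hclsA j, cls_eq_iff.mpr h]))
    have hmulAdj : ∀ i j : Fin n, (cycleGraph n).Adj i j → (A i).1 * (A j).1 = 0 :=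
      fun i j h => adj_mul ((hAdjIff i j).mpr h)
    have hmulNe : ∀ i j : Fin n, i ≠ j → ¬ (cycleGraph n).Adj i j →
        (A i).1 * (A j).1 ≠ 0 := by
      intro i j hij hnadj h
      rcases adj_or_eq h with hc | hc
      · rw [hclsA i, hclsA j] at hc
        exact hij (e.symm.injective hc)
      · exact hnadj ((hAdjIff i j).mp hc)
    have huniv : ∀ x : ZD R, ∃ i : Fin n, ann R x.1 = ann R (A i).1 := by
      intro x
      refine ⟨e (cls R x), cls_eq_iff.mp ?_⟩
      rw [hclsA, Equiv.symm_apply_apply]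
    rcases (by omega : n = 3 ∨ n = 4 ∨ 5 ≤ n) with rfl | rfl | h5
    · -- n = 3
      have hab := hmulAdj 0 1 (by decide)
      have hbc := hmulAdj 1 2 (by decide)
      have hac := hmulAdj 0 2 (by decide)
      have huniv' : ∀ x : ZD R, ann R x.1 = ann R (A 0).1 ∨
          ann R x.1 = ann R (A 1).1 ∨ ann R x.1 = ann R (A 2).1 := by
        intro x
        obtain ⟨i, hi⟩ := huniv x
        fin_cases i
        · exact Or.inl hi
        · exact Or.inr (Or.inl hi)
        · exact Or.inr (Or.inr hi)
      have hba : (A 1).1 * (A 0).1 = 0 := by linear_combination hab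
      have hca : (A 2).1 * (A 0).1 = 0 := by linear_combination hac
      have hcb : (A 2).1 * (A 1).1 = 0 := by linear_combination hbc
      have t0 := tri (A 0) (A 1) (A 2) hab hac hbc huniv'
      have t1 := tri (A 1) (A 0) (A 2) hba hbc hac
        (fun x => by rcases huniv' x with h|h|h <;> tauto)
      have t2 := tri (A 2) (A 0) (A 1) hca hcb hab
        (fun x => by rcases huniv' x with h|h|h <;> tauto)
      have d01 := hannNe 0 1 (by decide)
      have d02 := hannNe 0 2 (by decide)
      have d12 := hannNe 1 2 (by decide)
      rcases t0 with h01 | h02 <;> rcases t1 with h10 | h12 <;>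
        rcases t2 with h20 | h21
      · exact d01 (le_antisymm h01 h10)
      · exact d01 (le_antisymm h01 h10)
      · exact d01 (le_antisymm h01 (h12.trans h20))
      · exact d12 (le_antisymm h12 h21)
      · exact d02 (le_antisymm h02 h20)
      · exact d02 (le_antisymm h02 (h21.trans h10))
      · exact d02 (le_antisymm h02 h20)
      · exact d12 (le_antisymm h12 h21)
    · -- n = 4 : cycle m=A0, u=A1, b=A2, v=A3
      have hmu := hmulAdj 0 1 (by decide)
      have hub := hmulAdj 1 2 (by decide)
      have hbv := hmulAdj 2 3 (by decide)
      have hvm := hmulAdj 3 0 (by decide)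
      have hmb : (A 0).1 * (A 2).1 ≠ 0 := hmulNe 0 2 (by decide) (by decide)
      have huv : (A 1).1 * (A 3).1 ≠ 0 := hmulNe 1 3 (by decide) (by decide)
      have huniv' : ∀ x : ZD R, ann R x.1 = ann R (A 0).1 ∨
          ann R x.1 = ann R (A 1).1 ∨ ann R x.1 = ann R (A 2).1 ∨
          ann R x.1 = ann R (A 3).1 := by
        intro x
        obtain ⟨i, hi⟩ := huniv x
        fin_cases i
        · exact Or.inl hi
        · exact Or.inr (Or.inl hi)
        · exact Or.inr (Or.inr (Or.inl hi))
        · exact Or.inr (Or.inr (Or.inr hi))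
      have hbm : (A 2).1 * (A 0).1 ≠ 0 := fun h => hmb (by linear_combination h)
      have hvu : (A 3).1 * (A 1).1 ≠ 0 := fun h => huv (by linear_combination h)
      have Qm := quad (A 0) (A 1) (A 2) (A 3) hmu hub hbv hvm hmb huniv'
      have Qb := quad (A 2) (A 3) (A 0) (A 1) hbv hvm hmu hub hbm
        (fun x => by rcases huniv' x with h|h|h|h <;> tauto)
      have Qu := quad (A 1) (A 2) (A 3) (A 0) hub hbv hvm hmu huv
        (fun x => by rcases huniv' x with h|h|h|h <;> tauto)
      have Qv := quad (A 3) (A 0) (A 1) (A 2) hvm hmu hub hbv hvu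
        (fun x => by rcases huniv' x with h|h|h|h <;> tauto)
      have dmb := hannNe 0 2 (by decide)
      have dmu := hannNe 0 1 (by decide)
      have dmv := hannNe 0 3 (by decide)
      have duv := hannNe 1 3 (by decide)
      rcases Qm with hm | hm <;> rcases Qb with hb | hb
      · rcases Qu with hu | hu
        · exact dmu (le_antisymm (hm.trans inf_le_left) (hu.trans inf_le_right))
        · rcases Qv with hv | hv
          · exact dmv (le_antisymm (hm.trans inf_le_right) (hv.trans inf_le_left))
          · exact duv (le_antisymm hu hv)
      · rcases Qu with hu | hu
        · exact dmu (le_antisymm (hm.trans inf_le_left) (hu.trans inf_le_right))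
        · rcases Qv with hv | hv
          · exact dmv (le_antisymm (hm.trans inf_le_right) (hv.trans inf_le_left))
          · exact duv (le_antisymm hu hv)
      · rcases Qu with hu | hu
        · exact dmu (le_antisymm (hm.trans (hb.trans inf_le_right))
            (hu.trans inf_le_right))
        · rcases Qv with hv | hv
          · exact dmv (le_antisymm (hm.trans (hb.trans inf_le_left))
              (hv.trans inf_le_left))
          · exact duv (le_antisymm hu hv)
      · exact dmb (le_antisymm hm hb)
    · -- n ≥ 5
      have hn2 : 2 ≤ n := by omega
      have p01 := hmulAdj ⟨0, by omega⟩ ⟨1, by omega⟩ (cyc_adj_succ hn2 (by omega) (by omega))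
      have p12 := hmulAdj ⟨1, by omega⟩ ⟨2, by omega⟩ (cyc_adj_succ hn2 (by omega) (by omega))
      have p23 := hmulAdj ⟨2, by omega⟩ ⟨3, by omega⟩ (cyc_adj_succ hn2 (by omega) (by omega))
      have p34 := hmulAdj ⟨3, by omega⟩ ⟨4, by omega⟩ (cyc_adj_succ hn2 (by omega) (by omega))
      have hq0 : (A ⟨1, by omega⟩).1 * (A ⟨3, by omega⟩).1 ≠ 0 :=
        hmulNe ⟨1, by omega⟩ ⟨3, by omega⟩ (by simp [Fin.ext_iff]) (cyc_not_adj_13 h5)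
      set a1 := A ⟨1, by omega⟩ with ha1
      set a3 := A ⟨3, by omega⟩ with ha3
      have hq2 : (a1.1 * a3.1) * (A ⟨2, by omega⟩).1 = 0 := by
        linear_combination a3.1 * p12
      obtain ⟨qZ, hqZ1⟩ : ∃ q : ZD R, q.1 = a1.1 * a3.1 :=
        ⟨⟨a1.1 * a3.1, hq0, (A ⟨2, by omega⟩).1, (A ⟨2, by omega⟩).2.1, hq2⟩, rfl⟩
      have key : ∀ i : ℕ, (hi : i < n) →
          (qZ.1 * (A ⟨i, hi⟩).1 = 0) →
          (e (cls R qZ)).val = i ∨ (e (cls R qZ)).val = i + 1 ∨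
            (e (cls R qZ)).val + 1 = i ∨ (i = 0 ∧ (e (cls R qZ)).val = n - 1) ∨
            ((e (cls R qZ)).val = 0 ∧ i + 1 = n) := by
        intro i hi hq
        apply cyc_decode hn2 hi
        rcases adj_or_eq hq with hc | hc
        · left
          rw [hclsA] at hc
          rw [Equiv.apply_eq_iff_eq_symm_apply]
          exact hc
        · right
          rw [he, hclsA, e.apply_symm_apply] at hc
          exact hc
      have k0 := key 0 (by omega) (by rw [hqZ1]; linear_combination a3.1 * p01)
      have k2 := key 2 (by omega) (by rw [hqZ1]; exact hq2)
      have k4 := key 4 (by omega) (by rw [hqZ1]; linear_combination a1.1 * p34)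
      have hlt := (e (cls R qZ)).isLt
      omega
  · intro x y z w v hxy hyz hzw hwv hnadj hne
    have h1 := adj_mul hxy
    have h2 := adj_mul hyz
    have h3 := adj_mul hzw
    have h4 := adj_mul hwv
    refine ⟨fun h => hnadj ⟨hne, y, w, rfl, rfl, h⟩, ?_, ?_, ?_⟩
    · linear_combination w.1 * h1
    · linear_combination y.1 * h3
    · linear_combination y.1 * h4
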